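/- Every connected edge-pancyclic simple graph of order n ≥ 3 has diameter at most ⌊2n/5⌋. -/

import Mathlib

/-- Number of edges of a simple graph. -/
noncomputable def numEdges {V : Type*} (G : SimpleGraph V) : ℕ := Nat.card G.edgeSet

/-- Every edge of `G` lies in a triangle. -/
def EveryEdgeInTriangle {V : Type*} (G : SimpleGraph V) : Prop :=
  ∀ ⦃u v : V⦄, G.Adj u v → ∃ w, G.Adj u w ∧ G.Adj v w

/-- `G` is 2-connected: it has at least 3 vertices and deleting any single vertex
leaves a connected graph. -/
def TwoConnected {V : Type*} (G : SimpleGraph V) : Prop :=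
  3 ≤ Nat.card V ∧ ∀ v : V, (G.induce ({v}ᶜ : Set V)).Connected

/-- `G` is 3-connected: it has at least 4 vertices and deleting any set of at most 2
vertices leaves a connected graph. -/
def ThreeConnected {V : Type*} (G : SimpleGraph V) : Prop :=
  4 ≤ Nat.card V ∧ ∀ S : Set V, S.ncard ≤ 2 → (G.induce (Sᶜ : Set V)).Connected

/-- `G` is edge-pancyclic: every edge lies in a cycle of each length `k` with `3 ≤ k ≤ |V|`. -/
def EdgePancyclic {V : Type*} (G : SimpleGraph V) : Prop :=
  ∀ k : ℕ, 3 ≤ k → k ≤ Nat.card V → ∀ ⦃u v : V⦄, G.Adj u v →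
    ∃ c : G.Walk u u, c.IsCycle ∧ c.length = k ∧ s(u, v) ∈ c.edges

/-- Base relation for the graph `A_n` (`n = 2q`): vertices `inl i` are the cycle
vertices `vᵢ`, vertices `inr i` are the added vertices `uᵢ`; `vᵢ ~ vᵢ₊₁`,
`uᵢ ~ vᵢ` and `uᵢ ~ vᵢ₊₁`. -/
def ARel (q : ℕ) : (ZMod q ⊕ ZMod q) → (ZMod q ⊕ ZMod q) → Prop :=
  fun x y => match x, y with
    | Sum.inl a, Sum.inl b => a = b + 1
    | Sum.inr a, Sum.inl b => b = a ∨ b = a + 1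
    | _, _ => False

/-- The graph `A_n` where `n = 2q`. -/
def graphA (q : ℕ) : SimpleGraph (ZMod q ⊕ ZMod q) := SimpleGraph.fromRel (ARel q)

/-- The graph `F_n` where `n = 2q + 1`: `A_{n-1}` plus a new vertex (`none`)
adjacent to `v₁` and `v₂`. -/
def graphF (q : ℕ) : SimpleGraph (Option (ZMod q ⊕ ZMod q)) :=
  SimpleGraph.fromRel (fun x y => match x, y with
    | some a, some b => ARel q a b
    | none, some w => w = Sum.inl 1 ∨ w = Sum.inl 2
    | _, _ => False)

/-- The graph `G_n` where `n = 2q + 1`: `A_{n-1}` plus a new vertex (`none`)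
adjacent to `u₁` and `v₁`. -/
def graphG (q : ℕ) : SimpleGraph (Option (ZMod q ⊕ ZMod q)) :=
  SimpleGraph.fromRel (fun x y => match x, y with
    | some a, some b => ARel q a b
    | none, some w => w = Sum.inr 1 ∨ w = Sum.inl 1
    | _, _ => False)

/-- The graph `H_n` where `n = 2q + 1`: `A_{n-1}` with the edge `v₁v₂` subdivided by a
new vertex (`none`), which is moreover joined to `u₁`. -/
def graphH (q : ℕ) : SimpleGraph (Option (ZMod q ⊕ ZMod q)) :=
  SimpleGraph.fromRel (fun x y => match x, y with
    | some (Sum.inl a), some (Sum.inl b) =>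
        a = b + 1 ∧ ¬(a = 2 ∧ b = 1) ∧ ¬(a = 1 ∧ b = 2)
    | some a, some b => ARel q a b
    | none, some w => w = Sum.inl 1 ∨ w = Sum.inl 2 ∨ w = Sum.inr 1
    | _, _ => False)

/-- The wheel graph of order `n`: the hub `none` joined to every vertex of the
cycle `C_{n-1}` on `ZMod (n-1)`. -/
def wheelGraph (n : ℕ) : SimpleGraph (Option (ZMod (n - 1))) :=
  SimpleGraph.fromRel (fun x y => match x, y with
    | some a, some b => a = b + 1
    | none, some _ => True
    | _, _ => False)
set_option linter.unusedSectionVars false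

namespace EPHelper

open SimpleGraph Walk Finset

variable {V : Type*} [DecidableEq V] {G : SimpleGraph V}

/-- A closed walk with nodup support has support `[a]`. -/
lemma loop_support_eq {a : V} (r : G.Walk a a) (h : r.support.Nodup) : r.support = [a] := by
  cases r with
  | nil => simp
  | cons h' r' =>
    exfalso
    rw [Walk.support_cons] at h
    exact (List.nodup_cons.mp h).1 r'.end_mem_support

/-- In a walk with nodup support, an edge incident to the start vertex must be the
first edge. -/
lemma getVert_one_eq {b t z : V} (p : G.Walk b t) (hnd : p.support.Nodup)
    (he : s(z, b) ∈ p.edges) : p.getVert 1 = z := by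
  cases p with
  | nil => simp at he
  | @cons _ u _ h' r =>
    rw [Walk.edges_cons, List.mem_cons] at he
    rcases he with he | he
    · rcases Sym2.eq_iff.mp he with ⟨rfl, rfl⟩ | ⟨rfl, -⟩
      · exact absurd rfl h'.ne
      · simp [Walk.getVert_cons_succ, Walk.getVert_zero]
    · exfalso
      have hb : b ∈ r.support := r.snd_mem_support_of_mem_edges he
      rw [Walk.support_cons] at hnd
      exact (List.nodup_cons.mp hnd).1 hb

/-- From a Hamiltonian cycle through the edge `wz`, extract the long arc from `z` to `w`,
a walk with no duplicate vertices visiting every vertex. -/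
lemma ham_arc [Fintype V] {w z : V} (hwz : G.Adj w z)
    (c : G.Walk w w) (hc : c.IsCycle) (hlen : c.length = Fintype.card V)
    (he : s(w, z) ∈ c.edges) :
    ∃ q : G.Walk z w, q.support.Nodup ∧ ∀ v : V, v ∈ q.support := by
  obtain ⟨u, h', q, rfl⟩ := Walk.not_nil_iff.mp hc.not_nil
  have hnd : q.support.Nodup := by
    have h2 := hc.support_nodup
    rwa [Walk.support_cons, List.tail_cons] at h2
  have hqlen : q.support.length = Fintype.card V := by
    rw [Walk.length_support]
    rw [Walk.length_cons] at hlen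
    omega
  have hcover : ∀ v : V, v ∈ q.support := by
    intro v
    have h1 : q.support.toFinset.card = Fintype.card V := by
      rw [List.card_toFinset, List.dedup_eq_self.mpr hnd, hqlen]
    rw [← List.mem_toFinset, Finset.eq_univ_of_card _ h1]
    exact Finset.mem_univ v
  rw [Walk.edges_cons, List.mem_cons] at he
  rcases he with he | he
  · have hz : z = u := by
      rcases Sym2.eq_iff.mp he with ⟨-, rfl⟩ | ⟨rfl, h2⟩
      · rfl
      · exact absurd h2 hwz.ne'
    subst hz
    exact ⟨q, hnd, hcover⟩
  · -- the edge w-z is elsewhere; then z is the last inner vertex of q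
    have hqrevnil : ¬ q.reverse.Nil := by
      rw [Walk.nil_iff_length_eq, Walk.length_reverse]
      intro h0
      have : q.edges = [] := List.length_eq_zero_iff.mp (by rw [Walk.length_edges, h0])
      rw [this] at he
      simp at he
    obtain ⟨u2, h2, r, heq⟩ := Walk.not_nil_iff.mp hqrevnil
    have hrevnd : q.reverse.support.Nodup := by
      rw [Walk.support_reverse]
      exact List.nodup_reverse.mpr hnd
    have he' : s(z, w) ∈ q.reverse.edges := by
      rw [Walk.edges_reverse, List.mem_reverse, Sym2.eq_swap]
      exact he
    have hu2 : u2 = z := by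
      have h3 := getVert_one_eq q.reverse hrevnd he'
      rw [heq] at h3
      rwa [Walk.getVert_cons_succ, Walk.getVert_zero] at h3
    subst hu2
    -- r : G.Walk z u ; the arc is r followed by the edge u-w
    have hsupp : q.reverse.support = w :: r.support := by rw [heq, Walk.support_cons]
    have hwr : w ∉ r.support := by
      have := hrevnd
      rw [hsupp] at this
      exact (List.nodup_cons.mp this).1
    have hrnd : r.support.Nodup := by
      have := hrevnd
      rw [hsupp] at this
      exact (List.nodup_cons.mp this).2
    refine ⟨r.concat h'.symm, ?_, ?_⟩
    · rw [Walk.support_concat]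
      simp [List.concat_eq_append, List.nodup_append, hrnd, hwr]
      exact fun a ha haw => hwr (haw ▸ ha)
    · intro v
      rw [Walk.support_concat, List.mem_append]
      by_cases hvw : v = w
      · right; simp [hvw]
      · left
        have hv : v ∈ q.reverse.support := by
          rw [Walk.support_reverse, List.mem_reverse]
          exact hcover v
        rw [hsupp] at hv
        rcases List.mem_cons.mp hv with h | h
        · exact absurd h hvw
        · exact h

/-- Confinement: a walk ending at `w`, avoiding `z`, starting in `A`, never meets `B`. -/
lemma conf {A B : Set V} {w z : V}
    (hAB : ∀ a b, a ∈ A → b ∈ B → ¬ G.Adj a b)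
    (hdisj : ∀ v, v ∈ A → v ∈ B → False)
    (hwB : w ∉ B)
    (hcov : ∀ v : V, v ≠ w → v ≠ z → v ∈ A ∨ v ∈ B) :
    ∀ {s e : V} (r : G.Walk s e), e = w → r.support.Nodup → z ∉ r.support → s ∈ A →
      ∀ b ∈ r.support, b ∉ B := by
  intro s e r
  induction r with
  | nil =>
    intro _ _ _ hs b hb hbB
    rw [Walk.support_nil, List.mem_singleton] at hb
    subst hb
    exact hdisj _ hs hbB
  | @cons s t e h' r' ih =>
    intro he hnd hz hs b hb hbB
    rw [Walk.support_cons] at hnd hz hb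
    rcases List.mem_cons.mp hb with rfl | hb2
    · exact hdisj _ hs hbB
    · by_cases htw : t = w
      · have hte : t = e := htw.trans he.symm
        have hsup : r'.support = [t] := by
          subst hte
          exact loop_support_eq r' (List.nodup_cons.mp hnd).2
        rw [hsup, List.mem_singleton] at hb2
        subst hb2
        exact hwB (htw ▸ hbB)
      · have htz : t ≠ z := by
          intro h
          exact hz (List.mem_cons_of_mem _ (h ▸ r'.start_mem_support))
        rcases hcov t htw htz with htA | htB
        · exact ih he (List.nodup_cons.mp hnd).2
            (fun hzz => hz (List.mem_cons_of_mem _ hzz)) htA b hb2 hbB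
        · exact hAB s t hs htB h'

/-- Separation lemma: if `{w, z}` is an adjacent pair such that all other vertices split
into nonempty sets `A`, `B` with no edges between them, then `G` is not edge-pancyclic. -/
lemma sep [Fintype V] (hep : EdgePancyclic G) (hn : 3 ≤ Nat.card V)
    {w z : V} (hwz : G.Adj w z) (A B : Set V)
    (hdisj : ∀ v, v ∈ A → v ∈ B → False)
    (hwA : w ∉ A) (hwB : w ∉ B) (hzA : z ∉ A) (hzB : z ∉ B)
    (hcov : ∀ v : V, v ≠ w → v ≠ z → v ∈ A ∨ v ∈ B)
    (hAB : ∀ a b, a ∈ A → b ∈ B → ¬ G.Adj a b)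
    (hA : A.Nonempty) (hB : B.Nonempty) : False := by
  obtain ⟨c, hc, hlen, hec⟩ := hep (Nat.card V) hn le_rfl hwz
  rw [Nat.card_eq_fintype_card] at hlen
  obtain ⟨q, hnd, hcov'⟩ := ham_arc hwz c hc hlen hec
  have hqnil : ¬ q.Nil := Walk.not_nil_of_ne hwz.ne'
  obtain ⟨t, h1, q1, rfl⟩ := Walk.not_nil_iff.mp hqnil
  rw [Walk.support_cons] at hnd
  have hznq1 : z ∉ q1.support := (List.nodup_cons.mp hnd).1
  have hnd1 : q1.support.Nodup := (List.nodup_cons.mp hnd).2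
  have hmem : ∀ v : V, v ≠ z → v ∈ q1.support := by
    intro v hv
    have := hcov' v
    rw [Walk.support_cons] at this
    rcases List.mem_cons.mp this with h | h
    · exact absurd h hv
    · exact h
  by_cases htw : t = w
  · subst htw
    obtain ⟨a, ha⟩ := hA
    have haz : a ≠ z := fun h => hzA (h ▸ ha)
    have := hmem a haz
    rw [loop_support_eq q1 hnd1, List.mem_singleton] at this
    exact hwA (this ▸ ha)
  · have htz : t ≠ z := fun h => hznq1 (h ▸ q1.start_mem_support)
    rcases hcov t htw htz with htA | htB
    · obtain ⟨b, hb⟩ := hB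
      have hbz : b ≠ z := fun h => hzB (h ▸ hb)
      exact conf hAB hdisj hwB hcov q1 rfl hnd1 hznq1 htA b (hmem b hbz) hb
    · obtain ⟨a, ha⟩ := hA
      have haz : a ≠ z := fun h => hzA (h ▸ ha)
      exact conf (fun a b ha hb hadj => hAB b a hb ha hadj.symm)
        (fun v hv hv' => hdisj v hv' hv) hwA
        (fun v h1 h2 => (hcov v h1 h2).symm) q1 rfl hnd1 hznq1 htB a (hmem a haz) ha

/-- Every edge of an edge-pancyclic graph lies in a triangle, with apex distinct
from both endpoints. -/
lemma apex (hep : EdgePancyclic G) (hn : 3 ≤ Nat.card V) {a b : V} (hab : G.Adj a b) :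
    ∃ t, G.Adj a t ∧ G.Adj b t ∧ t ≠ a ∧ t ≠ b := by
  obtain ⟨c, hc, hlen, hec⟩ := hep 3 le_rfl hn hab
  have h0 : ¬ c.Nil := hc.not_nil
  obtain ⟨t1, h1, c1, rfl⟩ := Walk.not_nil_iff.mp h0
  have h0' : ¬ c1.Nil := by
    rw [Walk.nil_iff_length_eq]
    rw [Walk.length_cons] at hlen
    omega
  obtain ⟨t2, h2, c2, rfl⟩ := Walk.not_nil_iff.mp h0'
  have h0'' : ¬ c2.Nil := by
    rw [Walk.nil_iff_length_eq]
    rw [Walk.length_cons, Walk.length_cons] at hlen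
    omega
  obtain ⟨t3, h3, c3, rfl⟩ := Walk.not_nil_iff.mp h0''
  cases c3 with
  | cons h q =>
    exfalso
    simp only [Walk.length_cons] at hlen
    omega
  | nil =>
  have hnd := hc.support_nodup
  simp only [Walk.support_cons, Walk.support_nil, List.tail_cons] at hnd
  have h12 : t1 ≠ t2 := by intro h; simp [h, List.nodup_cons] at hnd
  have h1a : t1 ≠ a := by intro h; simp [h, List.nodup_cons] at hnd
  have h2a : t2 ≠ a := by intro h; simp [h, List.nodup_cons] at hnd
  simp only [Walk.edges_cons, Walk.edges_nil, List.mem_cons, List.not_mem_nil, or_false] at hec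
  rcases hec with hec | hec | hec
  · have hb : b = t1 := by
      rcases Sym2.eq_iff.mp hec with ⟨-, h⟩ | ⟨h, -⟩
      · exact h
      · exact absurd h.symm h1a
    subst hb
    exact ⟨t2, h3.symm, h2, h2a, fun h => h12 h.symm⟩
  · exfalso
    rcases Sym2.eq_iff.mp hec with ⟨h, -⟩ | ⟨h, -⟩
    · exact h1a h.symm
    · exact h2a h.symm
  · have hb : b = t2 := by
      rcases Sym2.eq_iff.mp hec with ⟨h, -⟩ | ⟨-, h⟩
      · exact absurd h.symm h2a
      · exact h
    subst hb
    exact ⟨t1, h1, h2.symm, h1a, h12⟩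

/-- The counting lemma. -/
lemma count_lemma (d : ℕ) (c : ℕ → ℕ) (hd : 2 ≤ d)
    (hc0 : 1 ≤ c 0) (hc1 : 3 ≤ c 1) (hcd : 1 ≤ c d)
    (hc2 : ∀ k, 1 ≤ k → k + 1 ≤ d → 2 ≤ c k)
    (hd3 : ∀ j, 1 ≤ j → j + 2 ≤ d → 3 ≤ c j ∨ 3 ≤ c (j + 1))
    (hde : 3 ≤ c (d - 1) ∨ 2 ≤ c d) :
    5 * d ≤ 2 * ∑ j ∈ Finset.range (d + 1), c j := by
  set T : ℕ → ℕ := fun k => ∑ j ∈ Finset.Ico k (d + 1), c j with hT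
  have hsplit : ∀ k, k < d + 1 → T k = c k + T (k + 1) := by
    intro k hk
    rw [hT]
    exact Finset.sum_eq_sum_Ico_succ_bot hk c
  have hTd : T d = c d := by
    rw [hT]
    simp [Finset.sum_Ico_eq_sum_range]
  have base : (3 ≤ c (d-1) → 5 * (d - (d-1)) + 3 ≤ 2 * T (d-1)) ∧
      5 * (d - (d-1)) + 2 ≤ 2 * T (d-1) := by
    have hs : T (d-1) = c (d-1) + T d := by
      have := hsplit (d-1) (by omega)
      rwa [show d - 1 + 1 = d by omega] at this
    have h2 : 2 ≤ c (d-1) := hc2 (d-1) (by omega) (by omega)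
    constructor
    · intro h3
      rw [hs, hTd]
      omega
    · rcases hde with h | h <;> rw [hs, hTd] <;> omega
  have key : ∀ i, i ≤ d - 2 →
      (3 ≤ c (d-1-i) → 5 * (d - (d-1-i)) + 3 ≤ 2 * T (d-1-i)) ∧
      5 * (d - (d-1-i)) + 2 ≤ 2 * T (d-1-i) := by
    intro i
    induction i with
    | zero => intro _; simpa using base
    | succ i ih =>
      intro hi
      have IH := ih (by omega)
      set k := d - 1 - (i+1) with hk
      have hk1 : d - 1 - i = k + 1 := by omega
      rw [hk1] at IH
      have hks : T k = c k + T (k + 1) := hsplit k (by omega)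
      have hck : 2 ≤ c k := hc2 k (by omega) (by omega)
      have hdk : d - k = (d - (k+1)) + 1 := by omega
      have hd3k := hd3 k (by omega) (by omega)
      constructor
      · intro h3
        have := IH.2
        rw [hks]
        omega
      · rcases hd3k with h | h
        · have := IH.2
          rw [hks]
          omega
        · have := IH.1 h
          rw [hks]
          omega
  have h1 := (key (d - 2) (le_refl _)).1
  rw [show d - 1 - (d - 2) = 1 by omega] at h1
  have hT1 : 5 * (d - 1) + 3 ≤ 2 * T 1 := h1 hc1
  have hfull : ∑ j ∈ Finset.range (d + 1), c j = c 0 + T 1 := by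
    rw [Finset.range_eq_Ico]
    exact Finset.sum_eq_sum_Ico_succ_bot (by omega) c
  rw [hfull]
  omega

end EPHelper

/-- Every connected edge-pancyclic graph of order `n ≥ 3` has diameter at
most `⌊2n/5⌋`. -/
theorem stmt_10 {V : Type*} (G : SimpleGraph V)
    (hn : 3 ≤ Nat.card V) (hconn : G.Connected) (hep : EdgePancyclic G) :
    G.diam ≤ 2 * Nat.card V / 5 := by
  classical
  have hfin : Finite V := (Nat.card_pos_iff.mp (by omega)).2
  haveI : Fintype V := Fintype.ofFinite V
  haveI : Nonempty V := (Nat.card_pos_iff.mp (by omega)).1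
  have hncard : Nat.card V = Fintype.card V := Nat.card_eq_fintype_card
  have hediam : G.ediam ≠ ⊤ := by
    obtain ⟨u, v, huv⟩ := SimpleGraph.exists_edist_eq_ediam_of_finite (G := G)
    rw [← huv, SimpleGraph.edist_ne_top_iff_reachable]
    exact hconn u v
  rw [Nat.le_div_iff_mul_le (by norm_num : 0 < 5)]
  by_cases hd1 : G.diam ≤ 1
  · omega
  push_neg at hd1
  set d := G.diam with hdd
  have hd2 : 2 ≤ d := hd1
  obtain ⟨x, y, hxy⟩ := SimpleGraph.exists_dist_eq_diam (G := G)
  obtain ⟨p, hp⟩ := hconn.exists_walk_length_eq_dist x y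
  rw [hxy] at hp
  rw [← hdd] at hp hxy
  -- distance step lemmas
  have hdle1 : ∀ u v : V, G.Adj u v → G.dist x v ≤ G.dist x u + 1 := by
    intro u v huv
    have h1 : G.dist u v ≤ 1 := by
      have h2 := SimpleGraph.dist_le (SimpleGraph.Walk.cons huv SimpleGraph.Walk.nil)
      simpa using h2
    have h2 := hconn.dist_triangle (u := x) (v := u) (w := v)
    omega
  have hadj : ∀ j, j < d → G.Adj (p.getVert j) (p.getVert (j + 1)) := by
    intro j hj
    exact p.adj_getVert_succ (by omega)
  have hXle : ∀ j, j ≤ d → G.dist x (p.getVert j) ≤ j := by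
    intro j
    induction j with
    | zero =>
      intro _
      rw [p.getVert_zero]
      simp [SimpleGraph.dist_self]
    | succ j ih =>
      intro hj
      have h1 := hdle1 _ _ (hadj j (by omega))
      have h2 := ih (by omega)
      omega
  have hYle : ∀ i, i ≤ d → G.dist (p.getVert (d - i)) y ≤ i := by
    intro i
    induction i with
    | zero =>
      intro _
      have h1 : p.getVert (d - 0) = y := by
        rw [Nat.sub_zero, ← hp]
        exact p.getVert_length
      rw [h1]
      simp [SimpleGraph.dist_self]
    | succ i ih =>
      intro hi
      have hadj' := hadj (d - (i + 1)) (by omega)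
      rw [show d - (i + 1) + 1 = d - i by omega] at hadj'
      have h1 : G.dist (p.getVert (d - (i + 1))) (p.getVert (d - i)) ≤ 1 := by
        have h2 := SimpleGraph.dist_le (SimpleGraph.Walk.cons hadj' SimpleGraph.Walk.nil)
        simpa using h2
      have h2 := hconn.dist_triangle (u := p.getVert (d - (i + 1)))
        (v := p.getVert (d - i)) (w := y)
      have h3 := ih (by omega)
      omega
  have hXdist : ∀ j, j ≤ d → G.dist x (p.getVert j) = j := by
    intro j hj
    have h1 := hXle j hj
    have h2 := hYle (d - j) (by omega)
    rw [show d - (d - j) = j by omega] at h2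
    have h3 := hconn.dist_triangle (u := x) (v := p.getVert j) (w := y)
    rw [hxy] at h3
    omega
  have hfled : ∀ v, G.dist x v ≤ d := fun v => G.dist_le_diam hediam
  -- layer counts
  set c : ℕ → ℕ := fun j => (Finset.univ.filter (fun v => G.dist x v = j)).card with hc
  have hsum : Fintype.card V = ∑ j ∈ Finset.range (d + 1), c j :=
    Finset.card_eq_sum_card_fiberwise
      (fun v _ => Finset.mem_range.mpr (by have := hfled v; omega))
  have hmem : ∀ (j : ℕ) (v : V), G.dist x v = j →
      v ∈ Finset.univ.filter (fun u => G.dist x u = j) :=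
    fun j v h => Finset.mem_filter.mpr ⟨Finset.mem_univ v, h⟩
  have hone : ∀ j, j ≤ d → 1 ≤ c j :=
    fun j hj => Finset.card_pos.mpr ⟨p.getVert j, hmem j _ (hXdist j hj)⟩
  have htwo : ∀ (j : ℕ) (u v : V), u ≠ v → G.dist x u = j → G.dist x v = j → 2 ≤ c j := by
    intro j u v hne hu hv
    exact Finset.one_lt_card.mpr ⟨u, hmem j u hu, v, hmem j v hv, hne⟩
  have hmax2 : ∀ (j : ℕ) (u v : V), c j ≤ 2 → u ≠ v → G.dist x u = j → G.dist x v = j →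
      ∀ t, G.dist x t = j → t = u ∨ t = v := by
    intro j u v hcj hne hu hv t ht
    by_contra hcon
    push_neg at hcon
    have h1 : 2 < c j := Finset.two_lt_card_iff.mpr
      ⟨t, u, v, hmem _ _ ht, hmem _ _ hu, hmem _ _ hv, hcon.1, hcon.2, hne⟩
    omega
  -- heavy-layer lemma
  have hheavy : ∀ ℓ, 1 ≤ ℓ → ℓ + 1 ≤ d → ∀ w z : V, G.Adj w z →
      G.dist x w = ℓ → G.dist x z = ℓ → 3 ≤ c ℓ := by
    intro ℓ hl1 hld w z hwz hw hz
    by_contra hcon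
    push_neg at hcon
    have huniq := hmax2 ℓ w z (by omega) hwz.ne hw hz
    refine EPHelper.sep hep hn hwz {v | G.dist x v < ℓ} {v | ℓ < G.dist x v}
      (fun v h1 h2 => by simp only [Set.mem_setOf_eq] at h1 h2; omega)
      (by simp only [Set.mem_setOf_eq, hw]; omega)
      (by simp only [Set.mem_setOf_eq, hw]; omega)
      (by simp only [Set.mem_setOf_eq, hz]; omega)
      (by simp only [Set.mem_setOf_eq, hz]; omega)
      ?_ ?_ ?_ ?_
    · intro v hvw hvz
      simp only [Set.mem_setOf_eq]
      rcases lt_trichotomy (G.dist x v) ℓ with h | h | h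
      · exact Or.inl h
      · rcases huniq v h with rfl | rfl
        · exact absurd rfl hvw
        · exact absurd rfl hvz
      · exact Or.inr h
    · intro a b ha hb hab
      simp only [Set.mem_setOf_eq] at ha hb
      have := hdle1 a b hab
      omega
    · exact ⟨x, by simp only [Set.mem_setOf_eq, SimpleGraph.dist_self]; omega⟩
    · refine ⟨p.getVert d, ?_⟩
      simp only [Set.mem_setOf_eq, hXdist d le_rfl]
      omega
  -- layer 1 has ≥ 3 vertices
  have hc1 : 3 ≤ c 1 := by
    obtain ⟨t, hat, hbt, hta, htb⟩ := EPHelper.apex hep hn (hadj 0 (by omega))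
    rw [p.getVert_zero] at hat hta
    have hdt : G.dist x t ≤ 1 := by
      have := hdle1 x t hat
      simp only [SimpleGraph.dist_self] at this
      omega
    have hdt0 : G.dist x t ≠ 0 := by
      intro h0
      exact hta (hconn.dist_eq_zero_iff.mp h0).symm
    exact hheavy 1 le_rfl (by omega) (p.getVert 1) t hbt (hXdist 1 (by omega)) (by omega)
  -- middle layers have ≥ 2 vertices
  have hc2 : ∀ k, 1 ≤ k → k + 1 ≤ d → 2 ≤ c k := by
    intro k hk1 hkd
    rcases Nat.eq_or_lt_of_le hk1 with hk | hk
    · rw [← hk]; omega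
    by_contra hcon
    push_neg at hcon
    have huniq : ∀ t, G.dist x t = k → t = p.getVert k := by
      intro t ht
      by_contra hne
      have := htwo k t (p.getVert k) hne ht (hXdist k (by omega))
      omega
    rcases Nat.lt_or_ge (k + 1) d with hfwd | hbwd
    · -- forward separation
      refine EPHelper.sep hep hn (hadj k (by omega))
        {v | G.dist x v < k} {v | k < G.dist x v ∧ v ≠ p.getVert (k + 1)}
        (fun v h1 h2 => by simp only [Set.mem_setOf_eq] at h1 h2; omega)
        (by simp only [Set.mem_setOf_eq, hXdist k (by omega)]; omega)
        (by simp only [Set.mem_setOf_eq, hXdist k (by omega)]; omega)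
        (by simp only [Set.mem_setOf_eq, hXdist (k + 1) (by omega)]; omega)
        (by simp only [Set.mem_setOf_eq]; intro h; exact h.2 rfl)
        ?_ ?_ ?_ ?_
      · intro v hvw hvz
        simp only [Set.mem_setOf_eq]
        rcases lt_trichotomy (G.dist x v) k with h | h | h
        · exact Or.inl h
        · exact absurd (huniq v h) hvw
        · exact Or.inr ⟨h, hvz⟩
      · intro a b ha hb hab
        simp only [Set.mem_setOf_eq] at ha hb
        have := hdle1 a b hab
        omega
      · exact ⟨x, by simp only [Set.mem_setOf_eq, SimpleGraph.dist_self]; omega⟩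
      · refine ⟨p.getVert d, ?_⟩
        simp only [Set.mem_setOf_eq, hXdist d le_rfl]
        refine ⟨by omega, ?_⟩
        intro h
        have h2 := congrArg (G.dist x) h
        rw [hXdist d le_rfl, hXdist (k + 1) (by omega)] at h2
        omega
    · -- backward separation, k + 1 = d, k ≥ 2
      have hadj' : G.Adj (p.getVert k) (p.getVert (k - 1)) := by
        have := hadj (k - 1) (by omega)
        rw [show k - 1 + 1 = k by omega] at this
        exact this.symm
      refine EPHelper.sep hep hn hadj'
        {v | k < G.dist x v} {v | G.dist x v < k ∧ v ≠ p.getVert (k - 1)}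
        (fun v h1 h2 => by simp only [Set.mem_setOf_eq] at h1 h2; omega)
        (by simp only [Set.mem_setOf_eq, hXdist k (by omega)]; omega)
        (by simp only [Set.mem_setOf_eq, hXdist k (by omega)]; omega)
        (by simp only [Set.mem_setOf_eq, hXdist (k - 1) (by omega)]; omega)
        (by simp only [Set.mem_setOf_eq]; intro h; exact h.2 rfl)
        ?_ ?_ ?_ ?_
      · intro v hvw hvz
        simp only [Set.mem_setOf_eq]
        rcases lt_trichotomy (G.dist x v) k with h | h | h
        · exact Or.inr ⟨h, hvz⟩
        · exact absurd (huniq v h) hvw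
        · exact Or.inl h
      · intro a b ha hb hab
        simp only [Set.mem_setOf_eq] at ha hb
        have := hdle1 b a hab.symm
        omega
      · refine ⟨p.getVert d, ?_⟩
        simp only [Set.mem_setOf_eq, hXdist d le_rfl]
        omega
      · refine ⟨x, ?_⟩
        simp only [Set.mem_setOf_eq, SimpleGraph.dist_self]
        refine ⟨by omega, ?_⟩
        intro h
        have h2 := congrArg (G.dist x) h
        rw [SimpleGraph.dist_self, hXdist (k - 1) (by omega)] at h2
        omega
  -- triangle tokens in the middle
  have hd3 : ∀ j, 1 ≤ j → j + 2 ≤ d → 3 ≤ c j ∨ 3 ≤ c (j + 1) := by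
    intro j hj1 hjd
    obtain ⟨t, hat, hbt, hta, htb⟩ := EPHelper.apex hep hn (hadj j (by omega))
    have h1 : G.dist x t ≤ j + 1 := by
      have := hdle1 (p.getVert j) t hat
      rw [hXdist j (by omega)] at this
      omega
    have h2 : j ≤ G.dist x t := by
      have := hdle1 t (p.getVert (j + 1)) hbt.symm
      rw [hXdist (j + 1) (by omega)] at this
      omega
    rcases Nat.eq_or_lt_of_le h2 with h | h
    · exact Or.inl (hheavy j hj1 (by omega) (p.getVert j) t hat (hXdist j (by omega)) h.symm)
    · exact Or.inr (hheavy (j + 1) (by omega) (by omega) (p.getVert (j + 1)) t hbt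
        (hXdist (j + 1) (by omega)) (by omega))
  -- token at the end
  have hde : 3 ≤ c (d - 1) ∨ 2 ≤ c d := by
    obtain ⟨t, hat, hbt, hta, htb⟩ := EPHelper.apex hep hn (hadj (d - 1) (by omega))
    rw [show d - 1 + 1 = d by omega] at hbt htb
    have h1 : G.dist x t ≤ d := by
      have := hdle1 (p.getVert (d - 1)) t hat
      rw [hXdist (d - 1) (by omega)] at this
      omega
    have h2 : d - 1 ≤ G.dist x t := by
      have := hdle1 t (p.getVert d) hbt.symm
      rw [hXdist d le_rfl] at this
      omega
    rcases Nat.eq_or_lt_of_le h2 with h | h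
    · exact Or.inl (hheavy (d - 1) (by omega) (by omega) (p.getVert (d - 1)) t hat
        (hXdist (d - 1) (by omega)) h.symm)
    · exact Or.inr (htwo d t (p.getVert d) htb (by omega) (hXdist d le_rfl))
  have hcount := EPHelper.count_lemma d c hd2 (hone 0 (by omega)) hc1 (hone d le_rfl)
    hc2 hd3 hde
  rw [hncard, hsum]
  omega
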